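/- Let m₁, …, m_r be nonzero complex numbers and suppose a family of seminorms satisfies |Λ(ρ(a)Y^{𝐍}u)| = |∏ m_i^{N_i}| · |a^{(𝐍)}| · |Λ(ρ(a)u)| where a^{(𝐍)} = ∏ (t_i/t_{i+1})^{N_i} for a = diag-type parameter 𝐭 ∈ (ℝ₊ˣ)^{r+1}. If moreover |Λ(ρ(a)u)| ≤ ‖a‖^c |u|₀ for a continuous seminorm |·|₀, then for every positive integer N there is a continuous seminorm |·|_N (a finite nonnegative combination of the seminorms u ↦ |ρ(Y^{𝐍})u|₀) such that |Λ(ρ(a_𝐭)u)| ≤ ξ(𝐭)^{-N} ‖a_𝐭‖^c |u|_N for all 𝐭 ∈ (ℝ₊ˣ)^{r+1}, where ξ(𝐭) = ∏_{i=1}^r (1 + t_i/t_{i+1}). -/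
import Mathlib


open Finset

/-- majorization of Whittaker functions, abstract form.
`ρa tv` stands for `ρ(a_tv)`, `YN ν` for `ρ(Y^ν)` (`Y^ν = Y₁^{ν₁}⋯Y_r^{ν_r}`),
`Λabs u` for `|Λ(u)|_{π₀}`, `norm0` for the continuous seminorm `|·|_{ρ,0}`,
`nrm tv` for `‖a_tv‖`, and `m i` for the nonzero numbers `mᵢ = -ψ(Yᵢ)`.  Under the
commutation identity and the bound `|Λ(ρ(a)u)| ≤ ‖a‖^c |u|₀`, for every positive
integer `N` there is a continuous seminorm `|·|_N` — a finite nonnegative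
combination of the seminorms `u ↦ |ρ(Y^ν)u|₀` — with
`|Λ(ρ(a_tv)u)| ≤ ξ(tv)^{-N} ‖a_tv‖^c |u|_N`, where `ξ(tv) = ∏ (1 + tᵢ/tᵢ₊₁)`. -/
theorem whittaker_majorization
    (r : ℕ) (hr : 1 ≤ r)
    (V : Type*) [AddCommGroup V] [Module ℂ V]
    (ρa : (Fin (r + 1) → ℝ) → (V →ₗ[ℂ] V))
    (YN : (Fin r → ℕ) → (V →ₗ[ℂ] V))
    (Λabs norm0 : V → ℝ)
    (hΛabs : ∀ u, 0 ≤ Λabs u) (hnorm0 : ∀ u, 0 ≤ norm0 u)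
    (nrm : (Fin (r + 1) → ℝ) → ℝ)
    (hnrm : ∀ tv, 0 < nrm tv)
    (m : Fin r → ℂ) (hm : ∀ i, m i ≠ 0)
    (c : ℝ) (hc : 0 < c)
    (hcomm : ∀ (tv : Fin (r + 1) → ℝ), (∀ i, 0 < tv i) → ∀ (ν : Fin r → ℕ) (u : V),
      Λabs (ρa tv (YN ν u)) =
        (∏ i : Fin r, ‖m i‖ ^ ν i) *
        (∏ i : Fin r, (tv i.castSucc / tv i.succ) ^ ν i) * Λabs (ρa tv u))
    (hbound : ∀ (tv : Fin (r + 1) → ℝ), (∀ i, 0 < tv i) → ∀ u : V,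
      Λabs (ρa tv u) ≤ nrm tv ^ c * norm0 u)
    (N : ℕ) (hN : 0 < N) :
    ∃ a : (Fin r → Fin (N + 1)) → ℝ, (∀ ν, 0 ≤ a ν) ∧
      ∀ (tv : Fin (r + 1) → ℝ), (∀ i, 0 < tv i) → ∀ u : V,
        Λabs (ρa tv u) ≤
          ((∏ i : Fin r, (1 + tv i.castSucc / tv i.succ)) ^ N)⁻¹ * nrm tv ^ c *
            ∑ ν : Fin r → Fin (N + 1),
              a ν * norm0 (YN (fun i => (ν i : ℕ)) u) := by
  refine ⟨fun ν => ∏ i : Fin r, (N.choose (ν i) : ℝ) / ‖m i‖ ^ (ν i : ℕ), ?_, ?_⟩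
  · intro ν
    exact Finset.prod_nonneg fun i _ =>
      div_nonneg (Nat.cast_nonneg _) (pow_nonneg (norm_nonneg _) _)
  intro tv htv u
  set x : Fin r → ℝ := fun i => tv i.castSucc / tv i.succ with hx
  have hxpos : ∀ i, 0 < x i := fun i => div_pos (htv _) (htv _)
  have hξpos : 0 < ∏ i : Fin r, (1 + x i) :=
    Finset.prod_pos fun i _ => by have := hxpos i; linarith
  have hξN : 0 < (∏ i : Fin r, (1 + x i)) ^ N := pow_pos hξpos N
  have hexp : (∏ i : Fin r, (1 + x i)) ^ N
      = ∑ ν : Fin r → Fin (N + 1), ∏ i : Fin r, (N.choose (ν i) : ℝ) * x i ^ (ν i : ℕ) := by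
    rw [← Finset.prod_pow]
    have h1 : ∀ i : Fin r, (1 + x i) ^ N
        = ∑ k : Fin (N + 1), (N.choose (k : ℕ) : ℝ) * x i ^ (k : ℕ) := by
      intro i
      rw [add_comm, add_pow,
        Fin.sum_univ_eq_sum_range (fun k => (N.choose k : ℝ) * x i ^ k)]
      exact Finset.sum_congr rfl fun k hk => by ring
    simp_rw [h1]
    rw [Finset.prod_univ_sum, Fintype.piFinset_univ]
  have key : ∀ ν : Fin r → Fin (N + 1),
      (∏ i : Fin r, (N.choose (ν i) : ℝ) * x i ^ (ν i : ℕ)) * Λabs (ρa tv u)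
        ≤ (∏ i : Fin r, (N.choose (ν i) : ℝ) / ‖m i‖ ^ (ν i : ℕ)) *
            (nrm tv ^ c * norm0 (YN (fun i => (ν i : ℕ)) u)) := by
    intro ν
    have hMpos : 0 < ∏ i : Fin r, ‖m i‖ ^ (ν i : ℕ) :=
      Finset.prod_pos fun i _ => pow_pos (norm_pos_iff.mpr (hm i)) _
    have hc' := hcomm tv htv (fun i => (ν i : ℕ)) u
    have hb := hbound tv htv (YN (fun i => (ν i : ℕ)) u)
    rw [hc'] at hb
    have hXΛ : (∏ i : Fin r, x i ^ (ν i : ℕ)) * Λabs (ρa tv u)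
        ≤ (nrm tv ^ c * norm0 (YN (fun i => (ν i : ℕ)) u)) / ∏ i : Fin r, ‖m i‖ ^ (ν i : ℕ) := by
      rw [le_div_iff₀ hMpos]
      calc (∏ i : Fin r, x i ^ (ν i : ℕ)) * Λabs (ρa tv u) * ∏ i : Fin r, ‖m i‖ ^ (ν i : ℕ)
          = (∏ i : Fin r, ‖m i‖ ^ (ν i : ℕ)) * (∏ i : Fin r, x i ^ (ν i : ℕ)) *
              Λabs (ρa tv u) := by ring
        _ ≤ nrm tv ^ c * norm0 (YN (fun i => (ν i : ℕ)) u) := hb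
    have hCnn : 0 ≤ ∏ i : Fin r, (N.choose (ν i) : ℝ) :=
      Finset.prod_nonneg fun i _ => Nat.cast_nonneg _
    calc (∏ i : Fin r, (N.choose (ν i) : ℝ) * x i ^ (ν i : ℕ)) * Λabs (ρa tv u)
        = (∏ i : Fin r, (N.choose (ν i) : ℝ)) *
            ((∏ i : Fin r, x i ^ (ν i : ℕ)) * Λabs (ρa tv u)) := by
          rw [Finset.prod_mul_distrib]; ring
      _ ≤ (∏ i : Fin r, (N.choose (ν i) : ℝ)) *
            ((nrm tv ^ c * norm0 (YN (fun i => (ν i : ℕ)) u)) /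
              ∏ i : Fin r, ‖m i‖ ^ (ν i : ℕ)) := mul_le_mul_of_nonneg_left hXΛ hCnn
      _ = (∏ i : Fin r, (N.choose (ν i) : ℝ) / ‖m i‖ ^ (ν i : ℕ)) *
            (nrm tv ^ c * norm0 (YN (fun i => (ν i : ℕ)) u)) := by
          rw [Finset.prod_div_distrib]; ring
  have hsum : (∏ i : Fin r, (1 + x i)) ^ N * Λabs (ρa tv u)
      ≤ nrm tv ^ c * ∑ ν : Fin r → Fin (N + 1),
          (∏ i : Fin r, (N.choose (ν i) : ℝ) / ‖m i‖ ^ (ν i : ℕ)) *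
            norm0 (YN (fun i => (ν i : ℕ)) u) := by
    rw [hexp, Finset.sum_mul, Finset.mul_sum]
    refine Finset.sum_le_sum fun ν _ => ?_
    calc _ ≤ _ := key ν
      _ = nrm tv ^ c * ((∏ i : Fin r, (N.choose (ν i) : ℝ) / ‖m i‖ ^ (ν i : ℕ)) *
            norm0 (YN (fun i => (ν i : ℕ)) u)) := by ring
  have hinv : 0 ≤ ((∏ i : Fin r, (1 + x i)) ^ N)⁻¹ := inv_nonneg.mpr hξN.le
  calc Λabs (ρa tv u)
      = ((∏ i : Fin r, (1 + x i)) ^ N)⁻¹ * ((∏ i : Fin r, (1 + x i)) ^ N * Λabs (ρa tv u)) := by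
        rw [← mul_assoc, inv_mul_cancel₀ hξN.ne', one_mul]
    _ ≤ ((∏ i : Fin r, (1 + x i)) ^ N)⁻¹ * (nrm tv ^ c * ∑ ν : Fin r → Fin (N + 1),
          (∏ i : Fin r, (N.choose (ν i) : ℝ) / ‖m i‖ ^ (ν i : ℕ)) *
            norm0 (YN (fun i => (ν i : ℕ)) u)) := mul_le_mul_of_nonneg_left hsum hinv
    _ = _ := by rw [mul_assoc]
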